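/- arXiv:math/0612844 — 2 statements merged into one kernel-verified Lean document; each statement's English description precedes it below -/
import Mathlib

section
/- For the colored permutation group G_{r,n} = Z_r ≀ S_n with r ≥ 1 and n ≥ 1, the signed generating function over colored derangements satisfies ∑_{π ∈ D_{r,n}} q^{exc(π)} (−1)^{cyc(π)} = −q·[r]_q^n·[n−1]_q, where D_{r,n} is the set of π = (σ, z) with σ(i) ≠ i for all i. -/
open Finset Polynomial

/-- `exc_A` for a colored permutation `π = (z, σ) ∈ ℤ_r ≀ S_n`. -/
def excAc {r n : ℕ} (π : (Fin n → ZMod r) × Equiv.Perm (Fin n)) : ℕ :=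
  (Finset.univ.filter fun i => (π.1 i).val = 0 ∧ i < π.2 i).card

/-- `csum`: the sum of the colors (taken as representatives in `{0,…,r−1}`). -/
def csumc {r n : ℕ} (π : (Fin n → ZMod r) × Equiv.Perm (Fin n)) : ℕ :=
  ∑ i, (π.1 i).val

/-- The excedance number `exc(π) = r·exc_A(π) + csum(π)`. -/
def excc {r n : ℕ} (π : (Fin n → ZMod r) × Equiv.Perm (Fin n)) : ℕ :=
  r * excAc π + csumc π

/-- Number of cycles of the underlying permutation, counting fixed points. -/
def cyc {n : ℕ} (σ : Equiv.Perm (Fin n)) : ℕ :=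
  (Finset.univ.filter fun i => σ i = i).card + σ.cycleType.card

/-- derangement matrix: X below diagonal, 1 above, 0 on diagonal. -/
noncomputable def Mder (n : ℕ) : Matrix (Fin n) (Fin n) (Polynomial ℚ) :=
  Matrix.of fun i j => if j < i then X else if i < j then 1 else 0

/-- row-reduced version. -/
noncomputable def Bmat (n : ℕ) : Matrix (Fin n) (Fin n) (Polynomial ℚ) :=
  Matrix.of fun i j =>
    if (i : ℕ) + 1 = n then (if (j : ℕ) + 1 = n then 0 else X)
    else if j = i then -X else if (j : ℕ) = (i : ℕ) + 1 then 1 else 0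

/-- elementary row-operation matrix. -/
noncomputable def Tmat (n : ℕ) : Matrix (Fin n) (Fin n) (Polynomial ℚ) :=
  Matrix.of fun i j => if j = i then 1 else if (j : ℕ) = (i : ℕ) + 1 then -1 else 0

lemma detT (n : ℕ) : (Tmat n).det = 1 := by
  rw [Matrix.det_of_upperTriangular]
  · simp [Tmat]
  · intro i j hij
    simp only [Tmat, Matrix.of_apply, id] at *
    rw [if_neg (ne_of_lt hij), if_neg (by omega)]

lemma TM (n : ℕ) : Tmat n * Mder n = Bmat n := by
  ext i j
  rw [Matrix.mul_apply]
  have hsplit : ∀ k : Fin n, Tmat n i k * Mder n k j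
      = (if k = i then Mder n k j else 0)
        + (if (k : ℕ) = (i : ℕ) + 1 then -Mder n k j else 0) := by
    intro k
    simp only [Tmat, Matrix.of_apply]
    by_cases h1 : k = i
    · rw [if_pos h1, if_pos h1, if_neg (by omega), one_mul, add_zero]
    · rw [if_neg h1, if_neg h1]
      by_cases h2 : (k : ℕ) = (i : ℕ) + 1
      · rw [if_pos h2, if_pos h2, zero_add, neg_one_mul]
      · rw [if_neg h2, if_neg h2, zero_mul, add_zero]
  rw [Finset.sum_congr rfl (fun k _ => hsplit k), Finset.sum_add_distrib,
    Finset.sum_ite_eq' Finset.univ i, if_pos (Finset.mem_univ i)]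
  by_cases hlast : (i : ℕ) + 1 = n
  · have h2 : ∀ k : Fin n, ¬ ((k : ℕ) = (i : ℕ) + 1) := fun k => by omega
    rw [Finset.sum_congr rfl (fun k _ => if_neg (h2 k)), Finset.sum_const_zero, add_zero]
    simp only [Mder, Bmat, Matrix.of_apply, if_pos hlast]
    by_cases hj : (j : ℕ) + 1 = n
    · have : j = i := Fin.ext (by omega)
      rw [if_pos hj, this, if_neg (lt_irrefl i), if_neg (lt_irrefl i)]
    · have : j < i := by rw [Fin.lt_def]; omega
      rw [if_neg hj, if_pos this]
  · have hlt : (i : ℕ) + 1 < n := by omega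
    set i' : Fin n := ⟨(i : ℕ) + 1, hlt⟩ with hi'
    have h2 : ∀ k : Fin n, ((k : ℕ) = (i : ℕ) + 1) ↔ k = i' := by
      intro k; rw [Fin.ext_iff]
    rw [Finset.sum_congr rfl (fun k _ => by rw [if_congr (h2 k) rfl rfl]),
      Finset.sum_ite_eq' Finset.univ i', if_pos (Finset.mem_univ i')]
    simp only [Mder, Bmat, Matrix.of_apply, if_neg hlast]
    have hii' : (i' : ℕ) = (i : ℕ) + 1 := rfl
    rcases lt_trichotomy (j : ℕ) (i : ℕ) with h | h | h
    · rw [if_pos (show j < i by rwa [Fin.lt_def]), if_pos (show j < i' by rw [Fin.lt_def]; omega),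
        if_neg (show ¬ j = i by rw [Fin.ext_iff]; omega),
        if_neg (show ¬ (j:ℕ) = (i:ℕ)+1 by omega)]
      ring
    · have hj : j = i := Fin.ext h
      rw [if_neg (show ¬ j < i by rw [Fin.lt_def]; omega),
        if_neg (show ¬ i < j by rw [Fin.lt_def]; omega),
        if_pos (show j < i' by rw [Fin.lt_def]; omega), if_pos hj]
      ring
    · rcases Nat.eq_or_lt_of_le h with h' | h'
      · rw [if_neg (show ¬ j < i by rw [Fin.lt_def]; omega),
          if_pos (show i < j by rw [Fin.lt_def]; omega),
          if_neg (show ¬ j < i' by rw [Fin.lt_def]; omega),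
          if_neg (show ¬ i' < j by rw [Fin.lt_def]; omega),
          if_neg (show ¬ j = i by rw [Fin.ext_iff]; omega),
          if_pos (show (j:ℕ) = (i:ℕ)+1 by omega)]
        ring
      · rw [if_neg (show ¬ j < i by rw [Fin.lt_def]; omega),
          if_pos (show i < j by rw [Fin.lt_def]; omega),
          if_neg (show ¬ j < i' by rw [Fin.lt_def]; omega),
          if_pos (show i' < j by rw [Fin.lt_def]; omega),
          if_neg (show ¬ j = i by rw [Fin.ext_iff]; omega),
          if_neg (show ¬ (j:ℕ) = (i:ℕ)+1 by omega)]
        ring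

lemma minor0 (m : ℕ) :
    (Bmat (m + 2)).submatrix (Fin.succAbove 0) Fin.succ = Bmat (m + 1) := by
  ext a b
  simp only [Matrix.submatrix_apply, Bmat, Matrix.of_apply, Fin.succAbove_zero, Fin.val_succ,
    Fin.succ_inj]
  have h1 : ((a : ℕ) + 1 + 1 = m + 2) ↔ ((a : ℕ) + 1 = m + 1) := by omega
  have h2 : ((b : ℕ) + 1 + 1 = m + 2) ↔ ((b : ℕ) + 1 = m + 1) := by omega
  have h3 : ((b : ℕ) + 1 = (a : ℕ) + 1 + 1) ↔ ((b : ℕ) = (a : ℕ) + 1) := by omega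
  rw [if_congr h1 (if_congr h2 rfl rfl) (if_congr Iff.rfl rfl (if_congr h3 rfl rfl))]

lemma minorLast (m : ℕ) :
    ((Bmat (m + 2)).submatrix (Fin.succAbove (Fin.last (m + 1))) Fin.succ).det = 1 := by
  rw [Matrix.det_of_lowerTriangular]
  · apply Finset.prod_eq_one
    intro a _
    simp only [Matrix.submatrix_apply, Bmat, Matrix.of_apply, Fin.succAbove_last,
      Fin.coe_castSucc, Fin.val_succ, Fin.ext_iff]
    split_ifs with h1 h2 h3 <;> first | rfl | omega
  · intro a b hab
    have hab' : (a : ℕ) < (b : ℕ) := hab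
    simp only [Matrix.submatrix_apply, Bmat, Matrix.of_apply, Fin.succAbove_last,
      Fin.coe_castSucc, Fin.val_succ, Fin.ext_iff]
    split_ifs with h1 h2 h3 <;> first | rfl | omega

lemma detB : ∀ m : ℕ, (Bmat (m + 1)).det
    = (-1) ^ m * (X * ∑ i ∈ Finset.range m, (X : Polynomial ℚ) ^ i) := by
  intro m
  induction m with
  | zero =>
    rw [show (Bmat 1).det = Bmat 1 0 0 from Matrix.det_fin_one _]
    simp [Bmat]
  | succ m ih =>
    rw [show m + 1 + 1 = (m + 1).succ from rfl, Matrix.det_succ_column_zero]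
    have hcol : ∀ i : Fin (m + 2), i ∉ ({0, Fin.last (m + 1)} : Finset (Fin (m + 2))) →
        (-1 : Polynomial ℚ) ^ (i : ℕ) * Bmat (m + 2) i 0
          * ((Bmat (m + 2)).submatrix i.succAbove Fin.succ).det = 0 := by
      intro i hi
      simp only [Finset.mem_insert, Finset.mem_singleton, not_or] at hi
      obtain ⟨h0, hl⟩ := hi
      rw [Fin.ext_iff] at h0 hl
      simp only [Fin.val_zero, Fin.val_last] at h0 hl
      have : Bmat (m + 2) i 0 = 0 := by
        simp only [Bmat, Matrix.of_apply, Fin.val_zero]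
        rw [if_neg (by omega), if_neg (by rw [Fin.ext_iff]; simp only [Fin.val_zero]; omega)]
        exact if_neg (Nat.succ_ne_zero _).symm
      rw [this, mul_zero, zero_mul]
    have hpair : (0 : Fin (m + 2)) ≠ Fin.last (m + 1) := by
      intro h
      have := congrArg Fin.val h
      simp only [Fin.val_zero, Fin.val_last] at this
      omega
    rw [← Finset.sum_subset (Finset.subset_univ ({0, Fin.last (m + 1)} : Finset (Fin (m + 2))))
        (fun i _ hi => hcol i hi), Finset.sum_pair hpair]
    have e00 : Bmat (m + 2) 0 0 = -X := by
      simp only [Bmat, Matrix.of_apply, Fin.val_zero]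
      split_ifs with h1 h2 <;> first | rfl | omega | exact absurd rfl h2
    have elast : Bmat (m + 2) (Fin.last (m + 1)) 0 = X := by
      simp only [Bmat, Matrix.of_apply, Fin.val_zero, Fin.val_last]
      split_ifs with h1 h2 <;> first | rfl | omega
    rw [e00, elast, show (Fin.succAbove 0 : Fin (m+1) → Fin (m+2)) = Fin.succAbove 0 from rfl]
    rw [minor0, minorLast, ih, Fin.val_last, Fin.val_zero]
    rw [geom_sum_succ]
    ring

lemma detMder (n : ℕ) :
    (Mder (n + 1)).det = (-1) ^ n * (X * ∑ i ∈ Finset.range n, (X : Polynomial ℚ) ^ i) := by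
  have h := congrArg Matrix.det (TM (n + 1))
  rw [Matrix.det_mul, detT, one_mul] at h
  rw [h, detB]

lemma prodMder (n : ℕ) (σ : Equiv.Perm (Fin n)) :
    ∏ i, Mder n (σ i) i
      = if (∀ i, σ i ≠ i) then
          (X : Polynomial ℚ) ^ (Finset.univ.filter fun i => i < σ i).card
        else 0 := by
  by_cases h : ∀ i, σ i ≠ i
  · rw [if_pos h]
    have key : ∀ i, Mder n (σ i) i = if i < σ i then (X : Polynomial ℚ) else 1 := by
      intro i
      simp only [Mder, Matrix.of_apply]
      rcases lt_trichotomy i (σ i) with hc | hc | hc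
      · rw [if_pos hc, if_pos hc]
      · exact absurd hc.symm (h i)
      · rw [if_neg (asymm hc), if_pos hc, if_neg (not_lt_of_gt hc)]
    rw [Finset.prod_congr rfl (fun i _ => key i),
      Finset.prod_ite (fun _ => (X : Polynomial ℚ)) (fun _ => (1 : Polynomial ℚ))]
    simp [Finset.prod_const]
  · rw [if_neg h]
    push_neg at h
    obtain ⟨i, hi⟩ := h
    exact Finset.prod_eq_zero (Finset.mem_univ i) (by simp [Mder, hi])

lemma cycSign (n : ℕ) (σ : Equiv.Perm (Fin n)) :
    ((-1 : Polynomial ℚ)) ^ cyc σ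
      = (-1) ^ n * ((Equiv.Perm.sign σ : ℤ) : Polynomial ℚ) := by
  have hs : σ.cycleType.sum = σ.support.card := Equiv.Perm.sum_cycleType σ
  have hsupp : σ.support.card ≤ n := by
    have := Finset.card_le_univ σ.support
    simpa using this
  have hfix : (Finset.univ.filter fun i => σ i = i).card + σ.support.card = n := by
    have hsup : σ.support = Finset.univ.filter fun x => ¬ σ x = x := by
      ext x; simp [Equiv.Perm.mem_support]
    rw [hsup, Finset.card_filter_add_card_filter_not]
    simp
  have hsign : ((Equiv.Perm.sign σ : ℤ) : Polynomial ℚ)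
      = (-1) ^ (σ.support.card + σ.cycleType.card) := by
    rw [Equiv.Perm.sign_of_cycleType, hs]
    push_cast
    ring
  rw [hsign, cyc]
  set s := σ.support.card
  set c := σ.cycleType.card
  have h1 : (Finset.univ.filter fun i => σ i = i).card = n - s := by omega
  rw [h1, ← pow_add, show n + (s + c) = (n - s + c) + 2 * s by omega]
  simp [pow_add, pow_mul, neg_one_sq]

lemma partB (n : ℕ) :
    ∑ σ ∈ Finset.univ.filter (fun σ : Equiv.Perm (Fin (n + 1)) => ∀ i, σ i ≠ i),
      (-1 : Polynomial ℚ) ^ cyc σ * X ^ (Finset.univ.filter fun i => i < σ i).card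
    = -(X * ∑ i ∈ Finset.range n, (X : Polynomial ℚ) ^ i) := by
  have hdet := detMder n
  rw [Matrix.det_apply'] at hdet
  rw [Finset.sum_filter]
  have key : ∀ σ : Equiv.Perm (Fin (n + 1)),
      (if (∀ i, σ i ≠ i) then
          (-1 : Polynomial ℚ) ^ cyc σ * X ^ (Finset.univ.filter fun i => i < σ i).card
        else 0)
      = (-1) ^ (n + 1) * (((Equiv.Perm.sign σ : ℤ) : Polynomial ℚ)
          * ∏ i, Mder (n + 1) (σ i) i) := by
    intro σ
    rw [prodMder, cycSign]
    by_cases h : ∀ i, σ i ≠ i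
    · rw [if_pos h, if_pos h]; ring
    · rw [if_neg h, if_neg h]; ring
  rw [Finset.sum_congr rfl (fun σ _ => key σ), ← Finset.mul_sum, hdet, ← mul_assoc,
    ← pow_add, show n + 1 + n = 2 * n + 1 by omega, pow_succ, pow_mul, neg_one_sq, one_pow,
    one_mul, neg_one_mul]

lemma colorFactor (r : ℕ) [NeZero r] (P : Prop) [Decidable P] :
    ∑ c : ZMod r, (X : Polynomial ℚ) ^ ((if c.val = 0 ∧ P then r else 0) + c.val)
      = (if P then X else 1) * ∑ i ∈ Finset.range r, (X : Polynomial ℚ) ^ i := by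
  have hr : 0 < r := Nat.pos_of_ne_zero (NeZero.ne r)
  have hbij : ∑ c : ZMod r, (X : Polynomial ℚ) ^ ((if c.val = 0 ∧ P then r else 0) + c.val)
      = ∑ j ∈ Finset.range r, (X : Polynomial ℚ) ^ ((if j = 0 ∧ P then r else 0) + j) := by
    apply Finset.sum_nbij' (i := fun c : ZMod r => c.val) (j := fun j : ℕ => (j : ZMod r))
    · intro c _; exact Finset.mem_range.mpr (ZMod.val_lt c)
    · intro j _; exact Finset.mem_univ _
    · intro c _; exact ZMod.natCast_zmod_val c
    · intro j hj; exact ZMod.val_cast_of_lt (Finset.mem_range.mp hj)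
    · intro c _; rfl
  rw [hbij]
  by_cases hP : P
  · simp only [hP, and_true, if_pos]
    have step : ∀ j ∈ Finset.range r,
        (X : Polynomial ℚ) ^ ((if j = 0 then r else 0) + j)
          = (X : Polynomial ℚ) ^ j + (if j = 0 then (X : Polynomial ℚ) ^ r - 1 else 0) := by
      intro j _
      by_cases hj : j = 0
      · rw [if_pos hj, if_pos hj, hj]; ring
      · rw [if_neg hj, if_neg hj]; ring
    rw [Finset.sum_congr rfl step, Finset.sum_add_distrib,
      Finset.sum_ite_eq' (Finset.range r) 0 (fun _ => (X : Polynomial ℚ) ^ r - 1),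
      if_pos (Finset.mem_range.mpr hr)]
    have hg : ∑ i ∈ Finset.range (r + 1), (X : Polynomial ℚ) ^ i
        = X * ∑ i ∈ Finset.range r, (X : Polynomial ℚ) ^ i + 1 := geom_sum_succ
    rw [Finset.sum_range_succ] at hg
    linear_combination hg
  · simp only [hP, and_false, if_false, if_neg, zero_add, one_mul]


lemma zsum (r n : ℕ) [NeZero r] (σ : Equiv.Perm (Fin n)) :
    ∑ z : Fin n → ZMod r, (X : Polynomial ℚ) ^ excc (z, σ)
      = X ^ (Finset.univ.filter fun i => i < σ i).card
        * (∑ i ∈ Finset.range r, (X : Polynomial ℚ) ^ i) ^ n := by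
  have hexp : ∀ z : Fin n → ZMod r,
      excc (z, σ) = ∑ i, ((if (z i).val = 0 ∧ i < σ i then r else 0) + (z i).val) := by
    intro z
    rw [excc, excAc, csumc, Finset.card_filter, Finset.mul_sum, ← Finset.sum_add_distrib]
    apply Finset.sum_congr rfl
    intro i _
    by_cases h : (z i).val = 0 ∧ i < σ i
    · rw [if_pos h, if_pos h, mul_one]
    · rw [if_neg h, if_neg h, mul_zero]
  calc ∑ z : Fin n → ZMod r, (X : Polynomial ℚ) ^ excc (z, σ)
      = ∑ z : Fin n → ZMod r,
          ∏ i, (X : Polynomial ℚ) ^ ((if (z i).val = 0 ∧ i < σ i then r else 0) + (z i).val) := by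
        apply Finset.sum_congr rfl
        intro z _
        rw [hexp z, Finset.prod_pow_eq_pow_sum]
    _ = ∏ i, ∑ c : ZMod r,
          (X : Polynomial ℚ) ^ ((if c.val = 0 ∧ i < σ i then r else 0) + c.val) := by
        rw [← Finset.sum_prod_piFinset]
        rw [Fintype.piFinset_univ]
    _ = ∏ i : Fin n, ((if i < σ i then (X : Polynomial ℚ) else 1)
          * ∑ j ∈ Finset.range r, (X : Polynomial ℚ) ^ j) := by
        apply Finset.prod_congr rfl
        intro i _
        exact colorFactor r (i < σ i)
    _ = X ^ (Finset.univ.filter fun i => i < σ i).card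
          * (∑ i ∈ Finset.range r, (X : Polynomial ℚ) ^ i) ^ n := by
        rw [Finset.prod_mul_distrib, Finset.prod_const,
          Finset.prod_ite (fun _ => (X : Polynomial ℚ)) (fun _ => (1 : Polynomial ℚ)),
          Finset.prod_const, Finset.prod_const, one_pow, mul_one]
        simp

theorem signed_exc_sum_colored_derangements (r n : ℕ) [NeZero r] (hn : 1 ≤ n) :
    ∑ π ∈ Finset.univ.filter
        (fun π : (Fin n → ZMod r) × Equiv.Perm (Fin n) => ∀ i, π.2 i ≠ i),
        (-1 : Polynomial ℚ) ^ cyc π.2 * X ^ excc π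
      = -((X : Polynomial ℚ) * (∑ i ∈ Finset.range r, X ^ i) ^ n *
          ∑ i ∈ Finset.range (n - 1), X ^ i) := by
  obtain ⟨m, rfl⟩ : ∃ m, n = m + 1 := ⟨n - 1, by omega⟩
  have hsplit : (Finset.univ.filter
        (fun π : (Fin (m + 1) → ZMod r) × Equiv.Perm (Fin (m + 1)) => ∀ i, π.2 i ≠ i))
      = Finset.univ ×ˢ (Finset.univ.filter fun σ : Equiv.Perm (Fin (m + 1)) => ∀ i, σ i ≠ i) := by
    ext ⟨z, σ⟩
    simp
  rw [hsplit, Finset.sum_product_right]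
  have hinner : ∀ σ ∈ (Finset.univ.filter fun σ : Equiv.Perm (Fin (m + 1)) => ∀ i, σ i ≠ i),
      ∑ z : Fin (m + 1) → ZMod r, (-1 : Polynomial ℚ) ^ cyc σ * X ^ excc (z, σ)
        = ((-1 : Polynomial ℚ) ^ cyc σ * X ^ (Finset.univ.filter fun i => i < σ i).card)
            * (∑ i ∈ Finset.range r, (X : Polynomial ℚ) ^ i) ^ (m + 1) := by
    intro σ _
    rw [← Finset.mul_sum, zsum r (m + 1) σ, mul_assoc]
  rw [Finset.sum_congr rfl hinner, ← Finset.sum_mul, partB m]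
  simp only [Nat.add_sub_cancel]
  ring
end

section
/- Let r_1,…,r_k, n be positive integers, r = r_1⋯r_k, and K(q) = ∑_{m=1}^k r_{m+1}⋯r_k · ∑_{t=1}^{r_m−1} q^{t·r/r_m}. Then ∑_{π ∈ G} q^{exc(π)} (−1)^{cyc(π)} = −(1 + K(q))·(q^r − 1)^{n−1}, where G = (Z_{r_1} × ⋯ × Z_{r_k}) ≀ S_n. -/
open Finset Polynomial

/-- A color vector for the group `ℤ_{r 0} × ⋯ × ℤ_{r (k-1)}`. -/
abbrev Color (k : ℕ) (r : Fin k → ℕ) := ∀ j : Fin k, ZMod (r j)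

/-- An element of the wreath product `(ℤ_{r 0} × ⋯ × ℤ_{r (k-1)}) ≀ S_n`:
a color vector for each digit together with an underlying permutation. -/
abbrev GElt (k n : ℕ) (r : Fin k → ℕ) := (Fin n → Color k r) × Equiv.Perm (Fin n)

/-- `r = r_1 ⋯ r_k`. -/
def totR (k : ℕ) (r : Fin k → ℕ) : ℕ := ∏ j, r j

/-- `csum_p(π) = ∑_i z_i^p · ∏_{t<p} χ(z_i^t = 0)`, colors as representatives. -/
def csump {k n : ℕ} (r : Fin k → ℕ) (Z : Fin n → Color k r) (p : Fin k) : ℕ :=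
  ∑ i, (Z i p).val * ∏ t ∈ Finset.Iio p, if (Z i t).val = 0 then 1 else 0

/-- `csum(π) = ∑_p csum_p(π) · ∏_{q ≠ p} r_q`. -/
def csum {k n : ℕ} (r : Fin k → ℕ) (Z : Fin n → Color k r) : ℕ :=
  ∑ p, csump r Z p * ∏ q ∈ Finset.univ.erase p, r q

/-- `exc_A(π)`: number of `i` with zero color vector and `σ(i) > i`. -/
def excA {k n : ℕ} (r : Fin k → ℕ) (π : GElt k n r) : ℕ :=
  (Finset.univ.filter fun i => (∀ j, (π.1 i j).val = 0) ∧ i < π.2 i).card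

/-- `exc(π) = r·exc_A(π) + ∑_p csum_p(π)·∏_{q≠p} r_q`. -/
def exc {k n : ℕ} (r : Fin k → ℕ) (π : GElt k n r) : ℕ :=
  totR k r * excA r π + csum r π.1

/-- `K(q) = ∑_{m=1}^k r_{m+1}⋯r_k ∑_{t=1}^{r_m−1} q^{t·r/r_m}`. -/
noncomputable def Kpoly (k : ℕ) (r : Fin k → ℕ) : Polynomial ℚ :=
  ∑ m : Fin k, ((∏ j ∈ Finset.Ioi m, r j : ℕ) : Polynomial ℚ) *
    ∑ t ∈ Finset.Ico 1 (r m), X ^ (t * ∏ q ∈ Finset.univ.erase m, r q)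

/-- The signed excedance generating function `∑_π q^{exc(π)} (−1)^{cyc(π)}`. -/
noncomputable def Pgen (k : ℕ) (r : Fin k → ℕ) [∀ j, NeZero (r j)] (n : ℕ) : Polynomial ℚ :=
  ∑ π : GElt k n r, (-1) ^ (cyc π.2) * X ^ (exc r π)

/-- The signed excedance generating function over derangements. -/
noncomputable def Qgen (k : ℕ) (r : Fin k → ℕ) [∀ j, NeZero (r j)] (n : ℕ) : Polynomial ℚ :=
  ∑ π ∈ Finset.univ.filter (fun π : GElt k n r => ∀ i, π.2 i ≠ i),
    (-1) ^ (cyc π.2) * X ^ (exc r π)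

/-- Wreath product multiplication `(Z,τ)·(U,σ) = ((z_i + u_{τ⁻¹(i)}), τ∘σ)`. -/
def wmul {k n : ℕ} {r : Fin k → ℕ} (p q : GElt k n r) : GElt k n r :=
  (fun i => p.1 i + q.1 (p.2⁻¹ i), p.2 * q.2)

/-- The identity of the wreath product. -/
def wone {k n : ℕ} {r : Fin k → ℕ} : GElt k n r := (fun _ => 0, 1)

/-- Number of absolute fixed points. -/
def fixn {n : ℕ} (σ : Equiv.Perm (Fin n)) : ℕ :=
  (Finset.univ.filter fun i => σ i = i).card

/-- `ε`: the number of even `r_i`. -/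
def epsn (k : ℕ) (r : Fin k → ℕ) : ℕ := (Finset.univ.filter fun i => 2 ∣ r i).card

/-- `f_n(u,v,w) = ∑_{π involution} u^{fix(π)} v^{exc_A(π)} w^{csum(π)}`,
with `u = X 0`, `v = X 1`, `w = X 2`. -/
noncomputable def fgen (k : ℕ) (r : Fin k → ℕ) [∀ j, NeZero (r j)] (n : ℕ) :
    MvPolynomial (Fin 3) ℚ :=
  ∑ π ∈ Finset.univ.filter (fun π : GElt k n r => wmul π π = wone),
    (MvPolynomial.X 0) ^ (fixn π.2) * (MvPolynomial.X 1) ^ (excA r π) *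
      (MvPolynomial.X 2) ^ (csum r π.1)

/-- `μ = 1` if `r` is odd, `μ = 1 + 2^ε w^{r/2}` if `r` is even. -/
noncomputable def muP (k : ℕ) (r : Fin k → ℕ) : MvPolynomial (Fin 3) ℚ :=
  if 2 ∣ totR k r then 1 + (2 ^ (epsn k r) : MvPolynomial (Fin 3) ℚ) *
    (MvPolynomial.X 2) ^ (totR k r / 2) else 1


section DetPart
open Matrix
variable {R : Type*} [CommRing R]


lemma det_lower (m : ℕ) (A B : R) :
    (Matrix.of fun i j : Fin (m+1) => if (j:ℕ) < (i:ℕ) then A else B).det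
      = (-1)^m * ((A-B)^m * B) := by
  set M : Matrix (Fin (m+1)) (Fin (m+1)) R := Matrix.of fun i j => if (j:ℕ) < (i:ℕ) then A else B with hM
  set E : Matrix (Fin (m+1)) (Fin (m+1)) R :=
    Matrix.of (fun i j => if i = j then 1 else if (i:ℕ) = (j:ℕ)+1 then -1 else 0) with hEdef
  have hE : E.det = 1 := by
    have htri : E.BlockTriangular OrderDual.toDual := by
      intro i j hij
      simp only [OrderDual.toDual_lt_toDual] at hij
      have h1 : ¬ (i = j) := by intro h; subst h; exact lt_irrefl _ hij
      have h2 : ¬ ((i:ℕ) = (j:ℕ)+1) := by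
        have : (i:ℕ) < (j:ℕ) := hij
        omega
      simp [hEdef, h1, h2]
    rw [Matrix.det_of_lowerTriangular E htri]
    simp [hEdef]
  set N : Matrix (Fin (m+1)) (Fin (m+1)) R :=
    Matrix.of (fun i j => if (j:ℕ) = m then B else if i = j then A - B else 0) with hNdef
  have key : (M * E).submatrix (finRotate (m+1)) id = N := by
    funext i j
    have hy : ((finRotate (m+1)) i : ℕ) = if (i:ℕ) = m then 0 else (i:ℕ)+1 := by
      rw [coe_finRotate]
      by_cases h : (i:ℕ) = m
      · have : i = Fin.last m := Fin.ext (by simpa using h)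
        simp [this, h]
      · have : i ≠ Fin.last m := by
          intro hc; exact h (by rw [hc]; simp)
        simp [this, h]
    set y := (finRotate (m+1)) i with hydef
    have hylt : (y:ℕ) < m+1 := y.isLt
    simp only [Matrix.submatrix_apply, Matrix.mul_apply, id_eq]
    have hMapp : ∀ a b : Fin (m+1), M a b = if (b:ℕ) < (a:ℕ) then A else B := fun a b => rfl
    have hsummand : ∀ k : Fin (m+1), M y k * E k j =
        (if k = j then M y k else 0) +
        (if (k:ℕ) = (j:ℕ)+1 then -(M y k) else 0) := by
      intro k
      by_cases h1 : k = j
      · subst h1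
        have h3 : ¬ ((k:ℕ) = (k:ℕ)+1) := by omega
        have : E k k = 1 := by simp [hEdef]
        rw [this, if_pos rfl, if_neg h3, mul_one, add_zero]
      · by_cases h2 : (k:ℕ) = (j:ℕ)+1
        · have : E k j = -1 := by
            show (if k = j then (1:R) else if (k:ℕ) = (j:ℕ)+1 then -1 else 0) = -1
            rw [if_neg h1, if_pos h2]
          rw [this, if_neg h1, if_pos h2, zero_add, mul_neg, mul_one]
        · have : E k j = 0 := by
            show (if k = j then (1:R) else if (k:ℕ) = (j:ℕ)+1 then -1 else 0) = 0
            rw [if_neg h1, if_neg h2]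
          rw [this, if_neg h1, if_neg h2, mul_zero, add_zero]
    rw [Finset.sum_congr rfl (fun k _ => hsummand k), Finset.sum_add_distrib,
      Finset.sum_ite_eq' univ j (fun k => M y k)]
    simp only [mem_univ, if_true]
    show M y j + _ = (if (j:ℕ) = m then B else if i = j then A - B else 0)
    by_cases hj : (j:ℕ) = m
    · have h2 : ∀ k : Fin (m+1), ¬((k:ℕ) = (j:ℕ)+1) := fun k => by have := k.isLt; omega
      rw [Finset.sum_congr rfl (fun k _ => if_neg (h2 k)), Finset.sum_const_zero, add_zero,
        if_pos hj, hMapp]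
      rw [if_neg (by omega)]
    · have hjm : (j:ℕ) < m := by have := j.isLt; omega
      set j' : Fin (m+1) := ⟨(j:ℕ)+1, Nat.succ_lt_succ hjm⟩ with hj'
      have hcond : ∀ k : Fin (m+1), ((k:ℕ) = (j:ℕ)+1) ↔ k = j' := by
        intro k
        rw [Fin.ext_iff]
      rw [Finset.sum_congr rfl (fun k _ => if_congr (hcond k) rfl rfl),
        Finset.sum_ite_eq' univ j' (fun k => -(M y k))]
      simp only [mem_univ, if_true]
      rw [if_neg hj]
      by_cases hij : i = j
      · subst hij
        have him : (i:ℕ) ≠ m := by omega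
        have hyv : (y:ℕ) = (i:ℕ)+1 := by rw [hy, if_neg him]
        rw [if_pos rfl, hMapp, hMapp, if_pos (by omega), if_neg (by simp [hj']; omega)]
        ring
      · have hvalne : (i:ℕ) ≠ (j:ℕ) := fun h => hij (Fin.ext h)
        rw [if_neg hij, hMapp, hMapp]
        have hne : (y:ℕ) ≠ (j:ℕ)+1 := by
          rw [hy]; split <;> omega
        have hj'v : (j':ℕ) = (j:ℕ)+1 := rfl
        by_cases hlt : (j:ℕ) < (y:ℕ)
        · rw [if_pos hlt, if_pos (by omega)]; ring
        · rw [if_neg hlt, if_neg (by omega)]; ring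
  have hNdet : N.det = (A-B)^m * B := by
    have htri : N.BlockTriangular id := by
      intro i j hij
      simp only [id] at hij
      have h1 : ¬((j:ℕ) = m) := by
        have : (j:ℕ) < (i:ℕ) := hij
        have := i.isLt
        omega
      have h2 : i ≠ j := ne_of_gt hij
      simp [hNdef, h1, h2]
    rw [Matrix.det_of_upperTriangular htri]
    have h1 : ∀ i : Fin (m+1), N i i = if (i:ℕ) = m then B else A - B := by
      intro i
      by_cases h : (i:ℕ) = m <;> simp [hNdef, h]
    rw [Finset.prod_congr rfl (fun i _ => h1 i), Fin.prod_univ_castSucc]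
    have h2 : ∀ i : Fin m, (if ((Fin.castSucc i : Fin (m+1)):ℕ) = m then B else A - B) = A - B := by
      intro i
      rw [if_neg]
      have := i.isLt
      simp
      omega
    rw [Finset.prod_congr rfl (fun i _ => h2 i)]
    simp [Fin.last]
  have hperm : ((M * E).submatrix (finRotate (m+1)) id).det
      = ((Equiv.Perm.sign (finRotate (m+1)) : ℤ) : R) * (M * E).det :=
    Matrix.det_permute _ _
  rw [key, hNdet, Matrix.det_mul, hE, mul_one, sign_finRotate] at hperm
  have hsign : (((((-1:ℤˣ))^m : ℤˣ) : ℤ) : R) = (-1)^m := by push_cast; ring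
  rw [Nat.add_sub_cancel, hsign] at hperm
  have h1 : ((-1:R)^m) * ((-1:R)^m) = 1 := by
    rw [← pow_add, ← two_mul, pow_mul]
    norm_num
  rw [hperm, ← mul_assoc, h1, one_mul]



lemma neg_one_pow_cyc {n : ℕ} (σ : Equiv.Perm (Fin n)) :
    ((-1:R))^(cyc σ) = (-1)^n * ((Equiv.Perm.sign σ : ℤ) : R) := by
  have hfix : (Finset.univ.filter fun i => σ i = i).card = n - σ.support.card := by
    have h1 : (Finset.univ.filter fun i => σ i = i) = Finset.univ \ σ.support := by
      ext i; simp [Equiv.Perm.mem_support]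
    rw [h1, Finset.card_sdiff_of_subset (Finset.subset_univ _)]
    simp
  have hs : σ.support.card = σ.cycleType.sum := (Equiv.Perm.sum_cycleType σ).symm
  have hsle : σ.cycleType.sum ≤ n := by
    rw [← hs]; exact le_trans (Finset.card_le_card (Finset.subset_univ _)) (by simp)
  have hsign : ((Equiv.Perm.sign σ : ℤ) : R) = (-1)^(σ.cycleType.sum + σ.cycleType.card) := by
    rw [Equiv.Perm.sign_of_cycleType]
    push_cast
    ring
  rw [hsign, cyc, hfix, hs]
  set s := σ.cycleType.sum
  set c := σ.cycleType.card
  have key : ((-1:R))^(n-s) = (-1)^n*(-1)^s := by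
    have h3 : n + s = (n - s) + 2*s := by omega
    rw [← pow_add, h3, pow_add, pow_mul]
    norm_num
  rw [pow_add, key, pow_add]
  ring

lemma perm_sum (m : ℕ) (A B : R) :
    ∑ σ : Equiv.Perm (Fin (m+1)), ((-1:R))^(cyc σ) * ∏ i, (if i < σ i then A else B)
      = -((A - B)^m * B) := by
  set M : Matrix (Fin (m+1)) (Fin (m+1)) R :=
    Matrix.of fun i j => if (j:ℕ) < (i:ℕ) then A else B with hM
  have h1 : ∀ σ : Equiv.Perm (Fin (m+1)),
      ∏ i, (if i < σ i then A else B) = ∏ i, M (σ i) i := by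
    intro σ
    refine Finset.prod_congr rfl fun i _ => ?_
    have : (i < σ i) ↔ ((i:ℕ) < ((σ i):ℕ)) := Fin.lt_def
    rw [if_congr this rfl rfl]
    rfl
  have h2 : ∑ σ : Equiv.Perm (Fin (m+1)), ((-1:R))^(cyc σ) * ∏ i, (if i < σ i then A else B)
      = (-1)^(m+1) * ∑ σ : Equiv.Perm (Fin (m+1)),
          ((Equiv.Perm.sign σ : ℤ) : R) * ∏ i, M (σ i) i := by
    rw [Finset.mul_sum]
    refine Finset.sum_congr rfl fun σ _ => ?_
    rw [h1 σ, neg_one_pow_cyc σ, mul_assoc]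
  rw [h2, ← Matrix.det_apply', det_lower]
  have hh : ((-1:R))^(m+1) * ((-1:R))^m = -1 := by
    rw [← pow_add]
    have h3 : m+1+m = 2*m+1 := by omega
    rw [h3, pow_succ, pow_mul]
    norm_num
  rw [← mul_assoc, hh]
  ring

end DetPart

section ColorPart
variable {k : ℕ} (r : Fin k → ℕ) [∀ j, NeZero (r j)]

/-- contribution of a single color to `csum`. -/
def cone (z : Color k r) : ℕ :=
  ∑ p, (z p).val * (∏ t ∈ Finset.Iio p, if (z t).val = 0 then 1 else 0) *
    ∏ q ∈ Finset.univ.erase p, r q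

lemma cone_zero : cone r (0 : Color k r) = 0 := by
  unfold cone
  refine Finset.sum_eq_zero fun p _ => ?_
  simp [ZMod.val_zero]

/-- first nonzero index of a color vector. -/
noncomputable def firstNZ (z : Color k r) : Option (Fin k) :=
  if h : ∀ j, z j = 0 then none
  else some ((Finset.univ.filter fun j => z j ≠ 0).min' (by
    obtain ⟨j, hj⟩ := not_forall.mp h
    exact ⟨j, Finset.mem_filter.mpr ⟨Finset.mem_univ _, hj⟩⟩))

lemma firstNZ_eq_none (z : Color k r) : firstNZ r z = none ↔ z = 0 := by
  unfold firstNZ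
  split
  · exact ⟨fun _ => funext (fun j => ‹∀ j, z j = 0› j), fun _ => rfl⟩
  · simp only [reduceCtorEq, false_iff]
    intro hz
    exact ‹¬ ∀ j, z j = 0› (fun j => by rw [hz]; rfl)

lemma firstNZ_eq_some (z : Color k r) (m : Fin k) :
    firstNZ r z = some m ↔ z m ≠ 0 ∧ ∀ j, j < m → z j = 0 := by
  unfold firstNZ
  split
  · rename_i h
    simp only [reduceCtorEq, false_iff, not_and]
    intro hm
    exact absurd (h m) hm
  · rename_i h
    rw [Option.some_inj]
    set s := Finset.univ.filter fun j => z j ≠ 0 with hs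
    have hne : s.Nonempty := by
      obtain ⟨j, hj⟩ := not_forall.mp h
      exact ⟨j, Finset.mem_filter.mpr ⟨Finset.mem_univ _, hj⟩⟩
    constructor
    · intro hmin
      constructor
      · have := s.min'_mem hne
        rw [hmin] at this
        exact (Finset.mem_filter.mp this).2
      · intro j hj
        by_contra hzj
        have hjs : j ∈ s := Finset.mem_filter.mpr ⟨Finset.mem_univ _, hzj⟩
        have := s.min'_le j hjs
        rw [hmin] at this
        exact absurd hj (not_lt.mpr this)
    · rintro ⟨h1, h2⟩
      have hms : m ∈ s := Finset.mem_filter.mpr ⟨Finset.mem_univ _, h1⟩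
      refine le_antisymm (s.min'_le m hms) ?_
      by_contra hc
      push_neg at hc
      have hmem := s.min'_mem hne
      exact (Finset.mem_filter.mp hmem).2 (h2 _ hc)

lemma cone_of_firstNZ (z : Color k r) (m : Fin k) (h : firstNZ r z = some m) :
    cone r z = (z m).val * ∏ q ∈ Finset.univ.erase m, r q := by
  rw [firstNZ_eq_some] at h
  obtain ⟨h1, h2⟩ := h
  unfold cone
  rw [Finset.sum_eq_single m]
  · congr 1
    rw [Finset.prod_congr rfl (fun t ht => ?_), Finset.prod_const_one, mul_one]
    rw [if_pos]
    rw [h2 t (Finset.mem_Iio.mp ht), ZMod.val_zero]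
  · intro p _ hp
    rcases lt_or_gt_of_ne hp with hlt | hgt
    · rw [h2 p hlt, ZMod.val_zero]
      ring
    · have : (∏ t ∈ Finset.Iio p, if (z t).val = 0 then 1 else 0) = 0 := by
        apply Finset.prod_eq_zero (Finset.mem_Iio.mpr hgt)
        rw [if_neg]
        rw [Ne, ZMod.val_eq_zero] at *
        exact h1
      rw [this, mul_zero, zero_mul]
  · intro h
    exact absurd (Finset.mem_univ m) h

lemma card_fiber (m : Fin k) (t : ℕ) (ht : t ∈ Finset.Ico 1 (r m)) :
    ((Finset.univ.filter fun z : Color k r =>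
        (∀ j, j < m → z j = 0) ∧ (z m).val = t)).card = ∏ j ∈ Finset.Ioi m, r j := by
  obtain ⟨ht1, ht2⟩ := Finset.mem_Ico.mp ht
  have key : (Finset.univ.filter fun z : Color k r =>
        (∀ j, j < m → z j = 0) ∧ (z m).val = t)
      = Fintype.piFinset (fun j => Finset.univ.filter
          fun x : ZMod (r j) => (j < m → x = 0) ∧ (j = m → x.val = t)) := by
    ext z
    simp only [Finset.mem_filter, Finset.mem_univ, true_and, Fintype.mem_piFinset]
    constructor
    · rintro ⟨h1, h2⟩ j
      exact ⟨fun hj => h1 j hj, fun hj => by subst hj; exact h2⟩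
    · intro h
      exact ⟨fun j hj => (h j).1 hj, (h m).2 rfl⟩
  rw [key, Fintype.card_piFinset]
  rw [← Finset.prod_subset (Finset.subset_univ (Finset.Ioi m))]
  · refine Finset.prod_congr rfl fun j hj => ?_
    have hj' : m < j := Finset.mem_Ioi.mp hj
    have e1 : (Finset.univ.filter fun x : ZMod (r j) =>
        (j < m → x = 0) ∧ (j = m → x.val = t)) = Finset.univ := by
      ext x
      simp only [Finset.mem_filter, Finset.mem_univ, true_and, iff_true]
      exact ⟨fun h => absurd h (not_lt.mpr hj'.le), fun h => absurd h (ne_of_gt hj')⟩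
    rw [e1]
    simp [ZMod.card]
  · intro j _ hj
    rw [Finset.mem_Ioi, not_lt] at hj
    rcases eq_or_lt_of_le hj with hjm | hjm
    · have e1 : (Finset.univ.filter fun x : ZMod (r j) =>
          (j < m → x = 0) ∧ (j = m → x.val = t)) = {((t : ℕ) : ZMod (r j))} := by
        ext x
        simp only [Finset.mem_filter, Finset.mem_univ, true_and, Finset.mem_singleton]
        subst hjm
        constructor
        · rintro ⟨-, h2⟩
          rw [← h2 rfl]
          exact (ZMod.natCast_rightInverse x).symm
        · intro h
          subst h
          exact ⟨fun hc => absurd hc (lt_irrefl _), fun _ => ZMod.val_cast_of_lt ht2⟩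
      rw [e1]
      simp
    · have e1 : (Finset.univ.filter fun x : ZMod (r j) =>
          (j < m → x = 0) ∧ (j = m → x.val = t)) = {0} := by
        ext x
        simp only [Finset.mem_filter, Finset.mem_univ, true_and, Finset.mem_singleton]
        constructor
        · rintro ⟨h1, -⟩
          exact h1 hjm
        · intro h
          exact ⟨fun _ => h, fun hc => absurd hc (ne_of_lt hjm)⟩
      rw [e1]
      simp

lemma fiber_some_sum (m : Fin k) :
    ∑ z ∈ Finset.univ.filter (fun z : Color k r => firstNZ r z = some m),
        (X:Polynomial ℚ)^(cone r z)
      = ((∏ j ∈ Finset.Ioi m, r j : ℕ) : Polynomial ℚ) *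
          ∑ t ∈ Finset.Ico 1 (r m), X ^ (t * ∏ q ∈ Finset.univ.erase m, r q) := by
  set Rm := ∏ q ∈ Finset.univ.erase m, r q with hRm
  have h1 : ∀ z ∈ Finset.univ.filter (fun z : Color k r => firstNZ r z = some m),
      (X:Polynomial ℚ)^(cone r z) = X^((z m).val * Rm) := by
    intro z hz
    rw [cone_of_firstNZ r z m (Finset.mem_filter.mp hz).2]
  rw [Finset.sum_congr rfl h1]
  have hmaps : ∀ z ∈ Finset.univ.filter (fun z : Color k r => firstNZ r z = some m),
      (z m).val ∈ Finset.Ico 1 (r m) := by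
    intro z hz
    have h2 := (Finset.mem_filter.mp hz).2
    rw [firstNZ_eq_some] at h2
    rw [Finset.mem_Ico]
    refine ⟨?_, ZMod.val_lt _⟩
    have h3 := h2.1
    rw [Ne, ← ZMod.val_eq_zero] at h3
    omega
  rw [← Finset.sum_fiberwise_of_maps_to hmaps (fun z => (X:Polynomial ℚ)^((z m).val * Rm))]
  rw [Finset.mul_sum]
  refine Finset.sum_congr rfl fun t ht => ?_
  have h3 : ∀ z ∈ (Finset.univ.filter fun z : Color k r => firstNZ r z = some m).filter
      (fun z => (z m).val = t), (X:Polynomial ℚ)^((z m).val * Rm) = X^(t * Rm) := by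
    intro z hz
    rw [(Finset.mem_filter.mp hz).2]
  rw [Finset.sum_congr rfl h3, Finset.sum_const]
  have hcard : ((Finset.univ.filter fun z : Color k r => firstNZ r z = some m).filter
      (fun z => (z m).val = t)).card = ∏ j ∈ Finset.Ioi m, r j := by
    rw [Finset.filter_filter]
    rw [← card_fiber r m t ht]
    congr 1
    apply Finset.filter_congr
    intro z _
    obtain ⟨ht1, ht2⟩ := Finset.mem_Ico.mp ht
    rw [firstNZ_eq_some]
    constructor
    · rintro ⟨⟨hzm, hlt⟩, hval⟩
      exact ⟨fun j hj => hlt j hj, hval⟩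
    · rintro ⟨hlt, hval⟩
      refine ⟨⟨?_, hlt⟩, hval⟩
      intro hc
      rw [hc, ZMod.val_zero] at hval
      omega
  rw [hcard, nsmul_eq_mul]

lemma sum_X_cone : ∑ z : Color k r, (X:Polynomial ℚ)^(cone r z) = 1 + Kpoly k r := by
  rw [← Finset.sum_fiberwise Finset.univ (firstNZ r) (fun z => (X:Polynomial ℚ)^(cone r z))]
  rw [Fintype.sum_option]
  congr 1
  · have h1 : Finset.univ.filter (fun z : Color k r => firstNZ r z = none) = {0} := by
      ext z
      simp [firstNZ_eq_none]
    rw [h1, Finset.sum_singleton, cone_zero, pow_zero]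
  · unfold Kpoly
    exact Finset.sum_congr rfl fun m _ => fiber_some_sum r m

section Glue

variable {k : ℕ} (r : Fin k → ℕ) [∀ j, NeZero (r j)]

lemma csum_eq_sum_cone {n : ℕ} (Z : Fin n → Color k r) :
    csum r Z = ∑ i, cone r (Z i) := by
  unfold csum csump cone
  rw [Finset.sum_congr rfl (fun p _ => Finset.sum_mul _ _ _)]
  rw [Finset.sum_comm]

lemma exc_eq_sum {n : ℕ} (Z : Fin n → Color k r) (σ : Equiv.Perm (Fin n)) :
    exc r (Z, σ) = ∑ i, (totR k r *
      (if (∀ j, (Z i j).val = 0) ∧ i < σ i then 1 else 0) + cone r (Z i)) := by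
  unfold exc excA
  rw [Finset.card_filter, csum_eq_sum_cone, Finset.mul_sum, ← Finset.sum_add_distrib]

lemma color_sum_ite (b : Prop) [Decidable b] :
    ∑ z : Color k r, (X:Polynomial ℚ)^(totR k r *
        (if (∀ j, (z j).val = 0) ∧ b then 1 else 0) + cone r z)
      = if b then X^(totR k r) + Kpoly k r else 1 + Kpoly k r := by
  have herase : ∑ z ∈ Finset.univ.erase (0 : Color k r), (X:Polynomial ℚ)^(cone r z)
      = Kpoly k r := by
    have h := sum_X_cone r
    rw [← Finset.add_sum_erase _ _ (Finset.mem_univ (0 : Color k r)), cone_zero, pow_zero] at h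
    exact add_left_cancel h
  by_cases hb : b
  · rw [if_pos hb]
    have key : ∀ z : Color k r,
        (X:Polynomial ℚ)^(totR k r * (if (∀ j, (z j).val = 0) ∧ b then 1 else 0) + cone r z)
          = if z = (0 : Color k r) then X^(totR k r) else X^(cone r z) := by
      intro z
      by_cases hz : z = (0 : Color k r)
      · subst hz
        rw [if_pos rfl, if_pos ⟨fun j => ZMod.val_zero, hb⟩, cone_zero, mul_one, add_zero]
      · rw [if_neg hz, if_neg, mul_zero, zero_add]
        rintro ⟨h1, -⟩
        exact hz (funext fun j => (ZMod.val_eq_zero (z j)).mp (h1 j))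
    rw [Finset.sum_congr rfl (fun z _ => key z),
      ← Finset.add_sum_erase _ _ (Finset.mem_univ (0 : Color k r)), if_pos rfl]
    congr 1
    rw [← herase]
    refine Finset.sum_congr rfl fun z hz => ?_
    rw [if_neg (Finset.mem_erase.mp hz).1]
  · rw [if_neg hb]
    have key : ∀ z : Color k r,
        (totR k r * (if (∀ j, (z j).val = 0) ∧ b then 1 else 0) + cone r z) = cone r z := by
      intro z
      rw [if_neg (fun h => hb h.2), mul_zero, zero_add]
    rw [Finset.sum_congr rfl (fun z _ => by rw [key z])]
    exact sum_X_cone r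

end Glue
end ColorPart

theorem Pgen_closed_form (k : ℕ) (r : Fin k → ℕ) [∀ j, NeZero (r j)]
    (hk : 1 ≤ k) (hr : ∀ j, 1 ≤ r j) (n : ℕ) (hn : 1 ≤ n) :
    Pgen k r n = -((1 + Kpoly k r) * ((X : Polynomial ℚ) ^ totR k r - 1) ^ (n - 1)) := by
  obtain ⟨m, rfl⟩ : ∃ m, n = m + 1 := ⟨n - 1, by omega⟩
  set A : Polynomial ℚ := X ^ (totR k r) + Kpoly k r with hA
  set B : Polynomial ℚ := 1 + Kpoly k r with hB
  have h0 : Pgen k r (m+1) = ∑ σ : Equiv.Perm (Fin (m+1)),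
      ∑ Z : Fin (m+1) → Color k r, (-1) ^ (cyc σ) * X ^ (exc r (Z, σ)) := by
    rw [Pgen, Fintype.sum_prod_type, Finset.sum_comm]
  have h1 : ∀ σ : Equiv.Perm (Fin (m+1)),
      ∑ Z : Fin (m+1) → Color k r, (X : Polynomial ℚ) ^ (exc r (Z, σ))
        = ∏ i, (if i < σ i then A else B) := by
    intro σ
    have h2 : ∀ Z : Fin (m+1) → Color k r, (X : Polynomial ℚ) ^ (exc r (Z, σ))
        = ∏ i, X ^ (totR k r *
            (if (∀ j, (Z i j).val = 0) ∧ i < σ i then 1 else 0) + cone r (Z i)) := by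
      intro Z
      rw [exc_eq_sum, Finset.prod_pow_eq_pow_sum]
    rw [Finset.sum_congr rfl (fun Z _ => h2 Z)]
    rw [← Fintype.piFinset_univ]
    refine Eq.trans (Finset.prod_univ_sum (fun _ => (Finset.univ : Finset (Color k r)))
      (fun i z => (X:Polynomial ℚ) ^ (totR k r *
        (if (∀ j, (z j).val = 0) ∧ i < σ i then 1 else 0) + cone r z))).symm ?_
    exact Finset.prod_congr rfl fun i _ => color_sum_ite r (i < σ i)
  have h3 : Pgen k r (m+1) = ∑ σ : Equiv.Perm (Fin (m+1)),
      ((-1 : Polynomial ℚ)) ^ (cyc σ) * ∏ i, (if i < σ i then A else B) := by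
    rw [h0]
    refine Finset.sum_congr rfl fun σ _ => ?_
    rw [← Finset.mul_sum, h1 σ]
  rw [h3, perm_sum]
  have hAB : A - B = X ^ (totR k r) - 1 := by
    rw [hA, hB]; ring
  rw [hAB, Nat.add_sub_cancel]
  ring
end
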